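/- Let ρ_d > 0, b > 0, and let α > 0 be a constant. Define b* by b* = b if b = ρ_d, and otherwise b* is the unique positive number with b* ≠ b and b*·exp(−b*/ρ_d) = b·exp(−b/ρ_d). Then ∫₀¹ α·exp((b − α)x/ρ_d) dx > ρ_d if and only if α > b*, and ∫₀¹ α·exp((b − α)x/ρ_d) dx = ρ_d if and only if α = b*. In particular, the unique real eigenvalue λ of the problem ρ_d (λ/ω + 1) = ∫₀¹ α·exp((b − α − λ)x/ρ_d) dx is positive iff α > b*, zero iff α = b*, and negative iff α < b*. -/

import Mathlib

open Real Set

set_option maxHeartbeats 1000000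

/-- Integral of an exponential. -/
lemma int_exp_aux (ρ c : ℝ) (hρ : ρ ≠ 0) (hc : c ≠ 0) :
    ∫ x in (0:ℝ)..1, Real.exp (c * x / ρ) = (ρ/c) * (Real.exp (c/ρ) - 1) := by
  have h : ∀ x : ℝ, c * x / ρ = (c/ρ) * x := fun x => by ring
  simp_rw [h]
  rw [intervalIntegral.integral_comp_mul_left (fun u => Real.exp u) (div_ne_zero hc hρ)]
  rw [integral_exp]
  simp [smul_eq_mul, inv_div]

theorem stmt7 (ρ b α ω : ℝ) (hρ : 0 < ρ) (hb : 0 < b) (hα : 0 < α) (hω : 0 < ω)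
    (bstar : ℝ)
    (hbstar₁ : b = ρ → bstar = b)
    (hbstar₂ : b ≠ ρ → 0 < bstar ∧ bstar ≠ b ∧
      bstar * Real.exp (-bstar / ρ) = b * Real.exp (-b / ρ)) :
    ((∫ x in (0 : ℝ)..1, α * Real.exp ((b - α) * x / ρ)) > ρ ↔ α > bstar) ∧
    ((∫ x in (0 : ℝ)..1, α * Real.exp ((b - α) * x / ρ)) = ρ ↔ α = bstar) ∧
    (∀ lam : ℝ,
      ρ * (lam / ω + 1) =
        (∫ x in (0 : ℝ)..1, α * Real.exp ((b - α - lam) * x / ρ)) →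
      ((0 < lam ↔ bstar < α) ∧ (lam = 0 ↔ α = bstar) ∧ (lam < 0 ↔ α < bstar))) := by
  set F : ℝ → ℝ := fun x => x * Real.exp (-x/ρ) with hF
  -- derivative of F
  have hF' : ∀ x : ℝ, HasDerivAt F (Real.exp (-x/ρ) * (1 - x/ρ)) x := by
    intro x
    have h1 : HasDerivAt (fun y : ℝ => -y/ρ) (-1/ρ) x := by
      simpa using ((hasDerivAt_id x).neg.div_const ρ)
    have h2 := h1.exp
    have h3 := (hasDerivAt_id x).mul h2
    refine h3.congr_deriv ?_
    simp only [id]; ring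
  have hFc : Continuous F := by
    apply continuous_id.mul
    exact (continuous_id.neg.div_const ρ).rexp
  have mono : StrictMonoOn F (Icc 0 ρ) := by
    apply strictMonoOn_of_deriv_pos (convex_Icc 0 ρ) hFc.continuousOn
    intro x hx
    rw [interior_Icc] at hx
    rw [(hF' x).deriv]
    have : x / ρ < 1 := (div_lt_one hρ).mpr hx.2
    have := Real.exp_pos (-x/ρ)
    nlinarith
  have anti : StrictAntiOn F (Ici ρ) := by
    apply strictAntiOn_of_deriv_neg (convex_Ici ρ) hFc.continuousOn
    intro x hx
    rw [interior_Ici] at hx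
    rw [(hF' x).deriv]
    have : 1 < x / ρ := (one_lt_div hρ).mpr hx
    have := Real.exp_pos (-x/ρ)
    nlinarith
  -- the key identity
  have key : ∀ a : ℝ, a ≠ b →
      (b - a) * ((∫ x in (0:ℝ)..1, a * Real.exp ((b - a) * x / ρ)) - ρ)
        = ρ * Real.exp (b/ρ) * (F a - F b) := by
    intro a ha
    have hc : b - a ≠ 0 := sub_ne_zero.mpr (Ne.symm ha)
    rw [intervalIntegral.integral_const_mul, int_exp_aux ρ (b-a) hρ.ne' hc]
    have hE : Real.exp ((b-a)/ρ) = Real.exp (b/ρ) * Real.exp (-a/ρ) := by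
      rw [← Real.exp_add]; ring_nf
    have h1 : Real.exp (b/ρ) * Real.exp (-b/ρ) = 1 := by
      rw [← Real.exp_add]
      norm_num [neg_div]
    rw [hE]
    simp only [hF]
    field_simp
    have h1' : Real.exp (b/ρ) * Real.exp (-(b/ρ)) = 1 := by rw [← neg_div]; exact h1
    linear_combination b * h1'
  -- value at a = b
  have Ib : (∫ x in (0:ℝ)..1, b * Real.exp ((b - b) * x / ρ)) = b := by
    simp
  set I := ∫ x in (0:ℝ)..1, α * Real.exp ((b - α) * x / ρ) with hI
  have hexpb : 0 < ρ * Real.exp (b/ρ) := by positivity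
  -- the three sign facts
  have P1 : α > bstar → I > ρ := by
    intro hgt
    by_cases hbρ : b = ρ
    · have hbs : bstar = b := hbstar₁ hbρ
      have hgt' : b < α := hbs ▸ hgt
      have hne : α ≠ b := ne_of_gt hgt'
      have hρα : ρ ≤ α := by rw [← hbρ]; exact hgt'.le
      have hFlt : F α < F b :=
        anti (mem_Ici.mpr hbρ.ge) (mem_Ici.mpr hρα) hgt'
      have hk := key α hne
      nlinarith [hk, hexpb, mul_pos hexpb (sub_pos.mpr hFlt)]
    · obtain ⟨hbsp, hbsne, hFeq⟩ := hbstar₂ hbρ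
      have hFsb : F bstar = F b := hFeq
      rcases lt_or_gt_of_ne hbρ with hblt | hbgt
      · -- b < ρ, so ρ < bstar
        have hbsρ : ρ < bstar := by
          by_contra h
          push_neg at h
          exact hbsne (mono.injOn ⟨hbsp.le, h⟩ ⟨hb.le, hblt.le⟩ hFsb)
        -- α > bstar > ρ > b
        have hne : α ≠ b := by linarith
        have hFlt : F α < F b := by
          rw [← hFsb]
          exact anti (mem_Ici.mpr (le_of_lt hbsρ)) (mem_Ici.mpr (by linarith)) hgt
        have hk := key α hne
        nlinarith [hk, mul_pos hexpb (sub_pos.mpr hFlt)]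
      · -- ρ < b, so bstar < ρ
        have hbsρ : bstar < ρ := by
          by_contra h
          push_neg at h
          exact hbsne (anti.injOn h (le_of_lt hbgt) hFsb)
        rcases lt_trichotomy α b with hab | hab | hab
        · have hFgt : F b < F α := by
            rw [← hFsb]
            by_cases hαρ : α ≤ ρ
            · exact mono ⟨hbsp.le, hbsρ.le⟩ ⟨by linarith, hαρ⟩ hgt
            · push_neg at hαρ
              calc F bstar = F b := hFsb
                _ < F α := anti (mem_Ici.mpr (le_of_lt hαρ)) (mem_Ici.mpr (le_of_lt hbgt)) hab
          have hne : α ≠ b := ne_of_lt hab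
          have hk := key α hne
          nlinarith [hk, mul_pos hexpb (sub_pos.mpr hFgt)]
        · rw [hI, hab, Ib]; exact hbgt
        · have hFlt : F α < F b :=
            anti (mem_Ici.mpr (le_of_lt hbgt)) (mem_Ici.mpr (by linarith)) hab
          have hne : α ≠ b := ne_of_gt hab
          have hk := key α hne
          nlinarith [hk, mul_pos hexpb (sub_pos.mpr hFlt)]
  have P2 : α = bstar → I = ρ := by
    intro heqa
    by_cases hbρ : b = ρ
    · have hbs : bstar = b := hbstar₁ hbρ
      rw [hI, heqa, hbs, Ib]
      exact hbρ
    · obtain ⟨hbsp, hbsne, hFeq⟩ := hbstar₂ hbρ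
      have hne : α ≠ b := heqa ▸ hbsne
      have hk := key α hne
      have hz : F α - F b = 0 := by
        rw [heqa]; rw [sub_eq_zero]; exact hFeq
      rw [hz, mul_zero] at hk
      have hc : b - α ≠ 0 := sub_ne_zero.mpr (Ne.symm hne)
      have := mul_eq_zero.mp hk
      rcases this with h | h
      · exact absurd h hc
      · linarith [sub_eq_zero.mp h]
  have P3 : α < bstar → I < ρ := by
    intro hlt
    by_cases hbρ : b = ρ
    · have hbs : bstar = b := hbstar₁ hbρ
      rw [hbs] at hlt
      have hne : α ≠ b := ne_of_lt hlt
      have hFlt : F α < F b := by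
        have : α ∈ Icc (0:ℝ) ρ := ⟨hα.le, by linarith [hbρ ▸ hlt]⟩
        exact mono this ⟨hb.le, hbρ.le⟩ hlt
      have hk := key α hne
      nlinarith [hk, mul_pos hexpb (sub_pos.mpr hFlt)]
    · obtain ⟨hbsp, hbsne, hFeq⟩ := hbstar₂ hbρ
      have hFsb : F bstar = F b := hFeq
      rcases lt_or_gt_of_ne hbρ with hblt | hbgt
      · -- b < ρ < bstar
        have hbsρ : ρ < bstar := by
          by_contra h
          push_neg at h
          exact hbsne (mono.injOn ⟨hbsp.le, h⟩ ⟨hb.le, hblt.le⟩ hFsb)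
        rcases lt_trichotomy α b with hab | hab | hab
        · have hFlt : F α < F b := mono ⟨hα.le, by linarith⟩ ⟨hb.le, hblt.le⟩ hab
          have hk := key α (ne_of_lt hab)
          nlinarith [hk, mul_pos hexpb (sub_pos.mpr hFlt)]
        · rw [hI, hab, Ib]; exact hblt
        · have hFgt : F b < F α := by
            by_cases hαρ : α ≤ ρ
            · exact mono ⟨hb.le, hblt.le⟩ ⟨hα.le, hαρ⟩ hab
            · push_neg at hαρ
              calc F b = F bstar := hFsb.symm
                _ < F α := anti (mem_Ici.mpr (le_of_lt hαρ)) (mem_Ici.mpr (le_of_lt hbsρ)) hlt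
          have hk := key α (ne_of_gt hab)
          nlinarith [hk, mul_pos hexpb (sub_pos.mpr hFgt)]
      · -- bstar < ρ < b, α < bstar
        have hbsρ : bstar < ρ := by
          by_contra h
          push_neg at h
          exact hbsne (anti.injOn h (le_of_lt hbgt) hFsb)
        have hFlt : F α < F b := by
          calc F α < F bstar := mono ⟨hα.le, by linarith⟩ ⟨hbsp.le, hbsρ.le⟩ hlt
            _ = F b := hFsb
        have hk := key α (by intro h; rw [h] at hlt; linarith : α ≠ b)
        nlinarith [hk, mul_pos hexpb (sub_pos.mpr hFlt)]
  -- assemble the first two iffs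
  have iff1 : I > ρ ↔ α > bstar := by
    constructor
    · intro h
      rcases lt_trichotomy α bstar with hc | hc | hc
      · linarith [P3 hc]
      · linarith [P2 hc]
      · exact hc
    · exact P1
  have iff2 : I = ρ ↔ α = bstar := by
    constructor
    · intro h
      rcases lt_trichotomy α bstar with hc | hc | hc
      · linarith [P3 hc]
      · exact hc
      · linarith [P1 hc]
    · exact P2
  refine ⟨iff1, iff2, ?_⟩
  intro lam heq
  -- monotonicity of the integral in lam
  have Gcmp : ∀ l₁ l₂ : ℝ, l₁ < l₂ →
      (∫ x in (0:ℝ)..1, α * Real.exp ((b - α - l₂) * x / ρ)) <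
      (∫ x in (0:ℝ)..1, α * Real.exp ((b - α - l₁) * x / ρ)) := by
    intro l₁ l₂ hl
    have hcont : ∀ l : ℝ, Continuous fun x : ℝ => α * Real.exp ((b - α - l) * x / ρ) :=
      fun l => continuous_const.mul (((continuous_const.mul continuous_id).div_const ρ).rexp)
    apply intervalIntegral.integral_lt_integral_of_continuousOn_of_le_of_exists_lt one_pos
    · exact (hcont l₂).continuousOn
    · exact (hcont l₁).continuousOn
    · intro x hx
      have hx0 : 0 < x := hx.1
      apply mul_le_mul_of_nonneg_left _ hα.le
      apply Real.exp_le_exp.mpr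
      rw [div_le_div_iff₀ hρ hρ]
      nlinarith [mul_pos (mul_pos (sub_pos.mpr hl) hx0) hρ]
    · refine ⟨1, ⟨by norm_num, le_rfl⟩, ?_⟩
      apply mul_lt_mul_of_pos_left _ hα
      apply Real.exp_lt_exp.mpr
      rw [div_lt_div_iff₀ hρ hρ]
      nlinarith [mul_pos (sub_pos.mpr hl) hρ]
  have G0 : (∫ x in (0:ℝ)..1, α * Real.exp ((b - α - 0) * x / ρ)) = I := by
    rw [hI]
    norm_num
  have fwd_pos : 0 < lam → bstar < α := by
    intro hlam
    have h1 : (∫ x in (0:ℝ)..1, α * Real.exp ((b - α - lam) * x / ρ)) < I := by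
      have := Gcmp 0 lam hlam
      rwa [G0] at this
    have h2 : ρ < ρ * (lam/ω + 1) := by
      have := div_pos hlam hω
      nlinarith
    rw [heq] at h2
    exact iff1.mp (lt_trans h2 h1)
  have fwd_neg : lam < 0 → α < bstar := by
    intro hlam
    have h1 : I < (∫ x in (0:ℝ)..1, α * Real.exp ((b - α - lam) * x / ρ)) := by
      have := Gcmp lam 0 hlam
      rwa [G0] at this
    have h2 : ρ * (lam/ω + 1) < ρ := by
      have : lam / ω < 0 := div_neg_of_neg_of_pos hlam hω
      nlinarith
    rw [heq] at h2
    have hIρ : I < ρ := lt_trans h1 h2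
    rcases lt_trichotomy α bstar with hc | hc | hc
    · exact hc
    · linarith [P2 hc]
    · linarith [P1 hc]
  have fwd_zero : lam = 0 → α = bstar := by
    intro h
    subst h
    rw [G0] at heq
    have h0 : ρ * ((0:ℝ)/ω + 1) = ρ := by simp
    rw [h0] at heq
    exact iff2.mp heq.symm
  refine ⟨⟨fwd_pos, ?_⟩, ⟨fwd_zero, ?_⟩, ⟨fwd_neg, ?_⟩⟩
  · intro h
    rcases lt_trichotomy lam 0 with hl | hl | hl
    · linarith [fwd_neg hl]
    · linarith [(fwd_zero hl) ▸ h]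
    · exact hl
  · intro h
    rcases lt_trichotomy lam 0 with hl | hl | hl
    · linarith [fwd_neg hl, h ▸ le_refl α]
    · exact hl
    · linarith [fwd_pos hl, h ▸ le_refl α]
  · intro h
    rcases lt_trichotomy lam 0 with hl | hl | hl
    · exact hl
    · linarith [(fwd_zero hl) ▸ h]
    · linarith [fwd_pos hl]
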